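/- Let s > 5/3 and r > 0. For m ∈ ℕ and j ∈ {0,1}, set c_{m,0} = 0, c_{m,1} = m^{−1/2}, and define u_{m,j}(t,x₁,x₂) = (2π)^{−1} r m^{−s} e^{iΦ_{m,j}(t,x₁,x₂)} + c_{m,j}, where Φ_{m,j}(t,x₁,x₂) = m x₁ − x₂ + t·m·(m² + 1 + r²m^{−2s} + c_{m,j}²). Then ‖u_{m,1}(0) − u_{m,0}(0)‖_{H^s(𝕋²)} = m^{−1/2} → 0 as m → ∞, while there exists a constant c_r > 0, independent of m and t, such that for all t ∈ [0,1] and all m, ‖u_{m,1}(t) − u_{m,0}(t)‖_{H^s(𝕋²)} ≥ c_r·|sin t| − m^{−1/2}. -/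

import Mathlib

noncomputable section

open MeasureTheory

/-- Fundamental domain `(-π, π]²` for the torus `𝕋² = (ℝ/2πℤ)²`. -/
def Q2 : Set (ℝ × ℝ) := Set.Ioc (-Real.pi) Real.pi ×ˢ Set.Ioc (-Real.pi) Real.pi

/-- `2π`-periodicity in each variable: functions on the torus `𝕋²`. -/
def Periodic2 (u : ℝ × ℝ → ℂ) : Prop :=
  ∀ x : ℝ × ℝ, u (x.1 + 2 * Real.pi, x.2) = u x ∧ u (x.1, x.2 + 2 * Real.pi) = u x

/-- The character `e^{i k·x}`. -/
def eK (k : ℤ × ℤ) (x : ℝ × ℝ) : ℂ :=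
  Complex.exp (Complex.I * (((k.1 : ℝ) * x.1 + (k.2 : ℝ) * x.2 : ℝ) : ℂ))

/-- Fourier coefficient `û(k) = (2π)^{-2} ∫_{Q2} u(x) e^{-i k·x} dx`. -/
def fcoef (u : ℝ × ℝ → ℂ) (k : ℤ × ℤ) : ℂ :=
  ((2 * Real.pi : ℂ) ^ 2)⁻¹ * ∫ x in Q2, u x * eK (-k) x

/-- Bessel weight `(1+|k|²)^{s/2}`. -/
def jweight (s : ℝ) (k : ℤ × ℤ) : ℝ :=
  (1 + (k.1 : ℝ) ^ 2 + (k.2 : ℝ) ^ 2) ^ (s / 2)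

/-- The Sobolev norm `‖u‖_{H^s} = ‖J^s u‖_{L²} = (Σ_k (1+|k|²)^s |û(k)|²)^{1/2}`,
with respect to the normalized measure `(2π)^{-2} dx`; `hnorm 0` is the `L²` norm. -/
def hnorm (s : ℝ) (u : ℝ × ℝ → ℂ) : ℝ :=
  Real.sqrt (∑' k : ℤ × ℤ, (jweight s k * ‖fcoef u k‖) ^ 2)

/-- Membership in `H^s(𝕋²)`. -/
def MemHs (s : ℝ) (u : ℝ × ℝ → ℂ) : Prop :=
  Periodic2 u ∧ IntegrableOn u Q2 ∧
    Summable (fun k : ℤ × ℤ => (jweight s k * ‖fcoef u k‖) ^ 2)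

/-- `L^∞(𝕋²)` norm. -/
def supnorm (u : ℝ × ℝ → ℂ) : ℝ := ⨆ x : ℝ × ℝ, ‖u x‖

/-- `‖∇u‖_{L^∞(𝕋²)}`. -/
def gradsupnorm (u : ℝ × ℝ → ℂ) : ℝ := ⨆ x : ℝ × ℝ, ‖fderiv ℝ u x‖

/-- Partial derivative `∂_{x₁}`. -/
def pd1 (u : ℝ × ℝ → ℂ) : ℝ × ℝ → ℂ := fun x => fderiv ℝ u x (1, 0)

/-- Partial derivative `∂_{x₂}`. -/
def pd2 (u : ℝ × ℝ → ℂ) : ℝ × ℝ → ℂ := fun x => fderiv ℝ u x (0, 1)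

/-- Dispersion relation `k₁³ + k₁k₂²`. -/
def disp (k : ℤ × ℤ) : ℝ := (k.1 : ℝ) ^ 3 + (k.1 : ℝ) * (k.2 : ℝ) ^ 2

/-- The linear mZK propagator acting on a sequence of Fourier coefficients:
`(W(t)φ)^(k) = e^{i(k₁³+k₁k₂²)t} φ̂(k)`. -/
def WofCoef (a : ℤ × ℤ → ℂ) (t : ℝ) (x : ℝ × ℝ) : ℂ :=
  ∑' k : ℤ × ℤ, Complex.exp (Complex.I * (disp k : ℂ) * (t : ℂ)) * a k * eK k x

/-- The linear mZK propagator `W(t)`. -/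
def Wprop (t : ℝ) (u : ℝ × ℝ → ℂ) : ℝ × ℝ → ℂ := WofCoef (fcoef u) t

/-- The mZK nonlinearity `|u|² ∂_{x₁} u` (without the factor 6). -/
def nonlin (u : ℝ × ℝ → ℂ) : ℝ × ℝ → ℂ :=
  fun x => u x * (starRingEnd ℂ) (u x) * pd1 u x

/-- Continuity of `t ↦ u(t)` in the `H^s` norm on `I`, i.e. `u ∈ C(I, H^s)`. -/
def ContHsOn (s : ℝ) (I : Set ℝ) (u : ℝ → ℝ × ℝ → ℂ) : Prop :=
  ∀ t ∈ I, ∀ ε > 0, ∃ δ > 0, ∀ t' ∈ I, |t' - t| < δ →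
    hnorm s (fun x => u t' x - u t x) < ε

/-- A strong solution of the mZK equation `∂_t u + ∂_{x₁}Δu = 6|u|²∂_{x₁}u`
on an interval `I ∋ 0` with datum `u₀`: a continuous curve in `H^s`
satisfying the Duhamel formula. -/
structure IsStrongSolution (s : ℝ) (I : Set ℝ) (u₀ : ℝ × ℝ → ℂ)
    (u : ℝ → ℝ × ℝ → ℂ) : Prop where
  mem : ∀ t ∈ I, MemHs s (u t)
  cont : ContHsOn s I u
  init : ∀ x, u 0 x = u₀ x
  duhamel : ∀ t ∈ I, ∀ x,
    u t x = Wprop t u₀ x + 6 * ∫ τ in (0:ℝ)..t, Wprop (t - τ) (nonlin (u τ)) x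

/-- The phase `Φ_{m,j}(t,x₁,x₂) = m x₁ − x₂ + t·m·(m² + 1 + r²m^{−2s} + c²)`. -/
def phaseMJ (s r : ℝ) (m : ℕ) (c : ℝ) (t : ℝ) (x : ℝ × ℝ) : ℝ :=
  (m : ℝ) * x.1 - x.2 +
    t * (m : ℝ) * ((m : ℝ) ^ 2 + 1 + r ^ 2 * (m : ℝ) ^ (-(2 * s)) + c ^ 2)

/-- The approximate solution `u_{m,j}(t,x) = (2π)^{−1} r m^{−s} e^{iΦ_{m,j}} + c_{m,j}`,
where `c = c_{m,j}` (`c_{m,0} = 0`, `c_{m,1} = m^{−1/2}`). -/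
def umj (s r : ℝ) (m : ℕ) (c : ℝ) (t : ℝ) (x : ℝ × ℝ) : ℂ :=
  (2 * Real.pi : ℂ)⁻¹ * (r : ℂ) * (((m : ℝ) ^ (-s) : ℝ) : ℂ) *
    Complex.exp (Complex.I * (phaseMJ s r m c t x : ℂ)) + (c : ℂ)

/-- `c_{m,1} = m^{-1/2}`. -/
def cm1 (m : ℕ) : ℝ := (m : ℝ) ^ (-(1 / 2 : ℝ))


lemma eK_mul (p q : ℤ × ℤ) (x : ℝ × ℝ) : eK p x * eK q x = eK (p + q) x := by
  unfold eK
  rw [← Complex.exp_add]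
  congr 1
  push_cast
  simp [Prod.fst_add, Prod.snd_add]
  push_cast
  ring

lemma continuous_eK (p : ℤ × ℤ) : Continuous (eK p) := by
  unfold eK
  fun_prop

lemma integrableOn_eK (p : ℤ × ℤ) : IntegrableOn (eK p) Q2 := by
  have hsub : Q2 ⊆ Set.Icc (-Real.pi) Real.pi ×ˢ Set.Icc (-Real.pi) Real.pi :=
    Set.prod_mono Set.Ioc_subset_Icc_self Set.Ioc_subset_Icc_self
  exact (((continuous_eK p).continuousOn).integrableOn_compact
    (isCompact_Icc.prod isCompact_Icc)).mono_set hsub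

lemma integral_exp_Ioc (n : ℤ) :
    (∫ x in Set.Ioc (-Real.pi) Real.pi, Complex.exp (Complex.I * n * x)) =
      if n = 0 then ((2 * Real.pi : ℝ) : ℂ) else 0 := by
  rw [← intervalIntegral.integral_of_le (by linarith [Real.pi_pos])]
  rcases eq_or_ne n 0 with h | h
  · rw [if_pos h]
    simp only [h, Int.cast_zero, mul_zero, zero_mul, Complex.exp_zero]
    rw [intervalIntegral.integral_const]
    norm_num
    push_cast
    ring
  · rw [if_neg h]
    rw [integral_exp_mul_complex (mul_ne_zero Complex.I_ne_zero
      (Int.cast_ne_zero.mpr h))]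
    rw [show (Complex.I * (n:ℂ) * ((Real.pi : ℝ) : ℂ)) =
        Complex.I * (n:ℂ) * ((-Real.pi : ℝ) : ℂ) + (n:ℂ) * (2 * Real.pi * Complex.I) from by
      push_cast; ring]
    rw [Complex.exp_add, Complex.exp_int_mul_two_pi_mul_I, mul_one, sub_self, zero_div]

lemma measQ2 : MeasurableSet Q2 := measurableSet_Ioc.prod measurableSet_Ioc

lemma integral_eK (p : ℤ × ℤ) :
    (∫ x in Q2, eK p x) = if p = 0 then (((2 * Real.pi : ℝ)) : ℂ) ^ 2 else 0 := by
  have hfun : ∀ x : ℝ × ℝ, eK p x =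
      Complex.exp (Complex.I * p.1 * x.1) * Complex.exp (Complex.I * p.2 * x.2) := by
    intro x; unfold eK; rw [← Complex.exp_add]; push_cast; ring_nf
  have h1 : (∫ x in Q2, eK p x) =
      (∫ a in Set.Ioc (-Real.pi) Real.pi, Complex.exp (Complex.I * p.1 * a)) *
      (∫ b in Set.Ioc (-Real.pi) Real.pi, Complex.exp (Complex.I * p.2 * b)) := by
    rw [show Q2 = Set.Ioc (-Real.pi) Real.pi ×ˢ Set.Ioc (-Real.pi) Real.pi from rfl]
    rw [Measure.volume_eq_prod]
    rw [← MeasureTheory.setIntegral_prod_mul]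
    exact setIntegral_congr_fun (by measurability) (fun x _ => hfun x)
  rw [h1, integral_exp_Ioc, integral_exp_Ioc]
  by_cases h1 : p.1 = 0 <;> by_cases h2 : p.2 = 0 <;>
    simp [Prod.ext_iff, h1, h2] <;> ring

lemma fcoef_single_add_const (p : ℤ × ℤ) (C D : ℂ) (k : ℤ × ℤ) :
    fcoef (fun x => C * eK p x + D) k =
      (if k = p then C else 0) + (if k = 0 then D else 0) := by
  unfold fcoef
  have h1 : ∀ x ∈ Q2, (C * eK p x + D) * eK (-k) x =
      C * eK (p + -k) x + D * eK (-k) x := by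
    intro x _; rw [← eK_mul]; ring
  rw [setIntegral_congr_fun measQ2 h1]
  rw [integral_add ((integrableOn_eK (p + -k)).const_mul C)
    ((integrableOn_eK (-k)).const_mul D)]
  rw [MeasureTheory.integral_const_mul, MeasureTheory.integral_const_mul,
    integral_eK, integral_eK]
  have h2pi : ((2 * Real.pi : ℂ)) ≠ 0 := by
    simp [Real.pi_ne_zero]
  have hpow : (((2 * Real.pi : ℝ)) : ℂ) ^ 2 ≠ 0 :=
    pow_ne_zero _ (Complex.ofReal_ne_zero.mpr (by positivity))
  simp only [add_neg_eq_zero, neg_eq_zero]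
  by_cases h : p = k
  · subst h
    by_cases h' : p = 0
    · subst h'
      simp only [if_pos rfl]
      field_simp
      push_cast
      ring
    · rw [if_pos rfl, if_pos rfl, if_neg h', if_neg h', mul_zero, add_zero, add_zero]
      field_simp
      push_cast
      ring
  · rw [if_neg h, if_neg (fun hh : k = p => h hh.symm), mul_zero]
    by_cases h' : k = 0
    · subst h'
      rw [if_pos rfl, if_pos rfl, zero_add, zero_add]
      field_simp
      push_cast
      ring
    · rw [if_neg h', if_neg h']
      simp

lemma jweight_zero (s : ℝ) : jweight s 0 = 1 := by
  unfold jweight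
  norm_num

lemma hnorm_single_add_const (s : ℝ) (p : ℤ × ℤ) (hp : p ≠ 0) (C D : ℂ) :
    hnorm s (fun x => C * eK p x + D) =
      Real.sqrt ((jweight s p * ‖C‖) ^ 2 + ‖D‖ ^ 2) := by
  unfold hnorm
  congr 1
  rw [tsum_eq_sum (s := ({p, 0} : Finset (ℤ × ℤ)))
    (by
      intro k hk
      simp only [Finset.mem_insert, Finset.mem_singleton, not_or] at hk
      rw [fcoef_single_add_const, if_neg hk.1, if_neg hk.2]
      simp)]
  rw [Finset.sum_pair hp]
  rw [fcoef_single_add_const, fcoef_single_add_const, if_pos rfl, if_pos rfl,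
    if_neg hp, if_neg (fun hh : (0 : ℤ × ℤ) = p => hp hh.symm)]
  rw [jweight_zero]
  simp

def Acoef (s r : ℝ) (m : ℕ) : ℂ :=
  (2 * Real.pi : ℂ)⁻¹ * (r : ℂ) * (((m : ℝ) ^ (-s) : ℝ) : ℂ)

def theta (s r : ℝ) (m : ℕ) (c t : ℝ) : ℝ :=
  t * (m : ℝ) * ((m : ℝ) ^ 2 + 1 + r ^ 2 * (m : ℝ) ^ (-(2 * s)) + c ^ 2)

lemma umj_sub (s r : ℝ) (m : ℕ) (c t : ℝ) (x : ℝ × ℝ) :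
    umj s r m c t x - umj s r m 0 t x =
      (Acoef s r m * (Complex.exp (Complex.I * ((theta s r m c t : ℝ) : ℂ)) -
        Complex.exp (Complex.I * ((theta s r m 0 t : ℝ) : ℂ)))) *
        eK ((m : ℤ), -1) x + (c : ℂ) := by
  unfold umj Acoef
  have e : ∀ c' : ℝ, Complex.exp (Complex.I * (phaseMJ s r m c' t x : ℂ)) =
      Complex.exp (Complex.I * ((theta s r m c' t : ℝ) : ℂ)) * eK ((m : ℤ), -1) x := by
    intro c'
    unfold phaseMJ theta eK
    rw [← Complex.exp_add]
    congr 1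
    push_cast
    ring
  rw [e, e]
  push_cast
  ring

lemma norm_ofReal' (c : ℝ) : ‖(c : ℂ)‖ = |c| := by
  rw [Complex.norm_real, Real.norm_eq_abs]

lemma hnorm_umj_sub (s r : ℝ) (m : ℕ) (c t : ℝ) :
    hnorm s (fun x => umj s r m c t x - umj s r m 0 t x) =
      Real.sqrt ((jweight s ((m : ℤ), -1) *
        ‖Acoef s r m * (Complex.exp (Complex.I * ((theta s r m c t : ℝ) : ℂ)) -
          Complex.exp (Complex.I * ((theta s r m 0 t : ℝ) : ℂ)))‖) ^ 2 + |c| ^ 2) := by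
  have hp : ((m : ℤ), (-1 : ℤ)) ≠ 0 := by simp [Prod.ext_iff]
  rw [show (fun x => umj s r m c t x - umj s r m 0 t x) =
      fun x => (Acoef s r m * (Complex.exp (Complex.I * ((theta s r m c t : ℝ) : ℂ)) -
        Complex.exp (Complex.I * ((theta s r m 0 t : ℝ) : ℂ)))) * eK ((m : ℤ), -1) x + (c : ℂ)
      from funext (umj_sub s r m c t)]
  rw [hnorm_single_add_const s _ hp, norm_ofReal']

lemma cm1_nonneg (m : ℕ) : 0 ≤ cm1 m := Real.rpow_nonneg (Nat.cast_nonneg m) _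

lemma hnorm_zero_eq (s r : ℝ) (m : ℕ) :
    hnorm s (fun x => umj s r m (cm1 m) 0 x - umj s r m 0 0 x) = cm1 m := by
  rw [hnorm_umj_sub]
  have h0 : ∀ c : ℝ, theta s r m c 0 = 0 := by intro c; unfold theta; ring
  rw [h0, h0, sub_self, mul_zero, norm_zero, mul_zero]
  rw [abs_of_nonneg (cm1_nonneg m)]
  simpa using Real.sqrt_sq (cm1_nonneg m)

lemma part3aux {s r : ℝ} (hs : s > 5 / 3) (hr : 0 < r) (m : ℕ) (hm : 1 ≤ m) (t : ℝ) :
    r * (2 * Real.pi)⁻¹ * |Real.sin t| - cm1 m ≤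
      hnorm s (fun x => umj s r m (cm1 m) t x - umj s r m 0 t x) := by
  rw [hnorm_umj_sub]
  have hm0 : (0 : ℝ) < m := by exact_mod_cast hm
  have hθ : theta s r m (cm1 m) t = theta s r m 0 t + t := by
    have hcm : cm1 m ^ 2 = ((m : ℝ))⁻¹ := by
      unfold cm1
      rw [← Real.rpow_natCast ((m : ℝ) ^ (-(1/2 : ℝ))) 2,
        ← Real.rpow_mul (Nat.cast_nonneg m)]
      norm_num
      exact Real.rpow_neg_one _
    unfold theta
    rw [hcm]
    field_simp
    ring
  have hsplit : Complex.exp (Complex.I * ((theta s r m (cm1 m) t : ℝ) : ℂ)) -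
      Complex.exp (Complex.I * ((theta s r m 0 t : ℝ) : ℂ)) =
      Complex.exp (Complex.I * ((theta s r m 0 t : ℝ) : ℂ)) *
        (Complex.exp (Complex.I * (t : ℂ)) - 1) := by
    rw [hθ, mul_sub, mul_one, ← Complex.exp_add]
    push_cast
    ring_nf
  have hlow : |Real.sin t| ≤ ‖Complex.exp (Complex.I * (t : ℂ)) - 1‖ := by
    have him : (Complex.exp (Complex.I * (t : ℂ)) - 1).im = Real.sin t := by
      rw [mul_comm]
      simp [Complex.sub_im, Complex.exp_ofReal_mul_I_im]
    rw [← him]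
    exact Complex.abs_im_le_norm _
  have hosc : |Real.sin t| ≤ ‖Complex.exp (Complex.I * ((theta s r m (cm1 m) t : ℝ) : ℂ)) -
      Complex.exp (Complex.I * ((theta s r m 0 t : ℝ) : ℂ))‖ := by
    rw [hsplit, norm_mul]
    rw [show ‖Complex.exp (Complex.I * ((theta s r m 0 t : ℝ) : ℂ))‖ = 1 from by
      rw [mul_comm, Complex.norm_exp_ofReal_mul_I], one_mul]
    exact hlow
  have hA : ‖Acoef s r m‖ = (2 * Real.pi)⁻¹ * r * (m : ℝ) ^ (-s) := by
    unfold Acoef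
    rw [norm_mul, norm_mul, norm_inv, norm_ofReal', norm_ofReal',
      show (2 * Real.pi : ℂ) = ((2 * Real.pi : ℝ) : ℂ) from by push_cast; ring, norm_ofReal']
    rw [abs_of_pos hr, abs_of_nonneg (Real.rpow_nonneg (Nat.cast_nonneg m) _),
      abs_of_pos (by positivity : (0:ℝ) < 2 * Real.pi)]
  have hWs : (m : ℝ) ^ s ≤ jweight s ((m : ℤ), -1) := by
    unfold jweight
    have h1 : ((m : ℝ) ^ 2) ^ (s / 2) = (m : ℝ) ^ s := by
      rw [← Real.rpow_natCast (m : ℝ) 2, ← Real.rpow_mul (Nat.cast_nonneg m)]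
      norm_num
      rw [show 2 * (s / 2) = s from by ring]
    rw [← h1]
    apply Real.rpow_le_rpow (sq_nonneg _) ?_ (by linarith)
    push_cast
    nlinarith [sq_nonneg ((m : ℝ))]
  have hms : (0:ℝ) < (m : ℝ) ^ (-s) := Real.rpow_pos_of_pos hm0 _
  have hWm : 1 ≤ jweight s ((m : ℤ), -1) * (m : ℝ) ^ (-s) := by
    have h2 : (m : ℝ) ^ s * (m : ℝ) ^ (-s) = 1 := by
      rw [← Real.rpow_add hm0]
      simp
    nlinarith [mul_le_mul_of_nonneg_right hWs (le_of_lt hms)]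
  set W := jweight s ((m : ℤ), -1) with hWdef
  have hWpos : 0 < W := lt_of_lt_of_le (Real.rpow_pos_of_pos hm0 s) hWs
  set ND := ‖Complex.exp (Complex.I * ((theta s r m (cm1 m) t : ℝ) : ℂ)) -
      Complex.exp (Complex.I * ((theta s r m 0 t : ℝ) : ℂ))‖ with hNDdef
  have hNDnn : 0 ≤ ND := norm_nonneg _
  have hX : r * (2 * Real.pi)⁻¹ * |Real.sin t| ≤
      W * ‖Acoef s r m * (Complex.exp (Complex.I * ((theta s r m (cm1 m) t : ℝ) : ℂ)) -
        Complex.exp (Complex.I * ((theta s r m 0 t : ℝ) : ℂ)))‖ := by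
    rw [norm_mul, hA, ← hNDdef]
    have hc1 : |Real.sin t| ≤ (W * (m : ℝ) ^ (-s)) * ND := by
      nlinarith [abs_nonneg (Real.sin t)]
    have hpir : (0:ℝ) < (2 * Real.pi)⁻¹ * r := by positivity
    nlinarith [mul_le_mul_of_nonneg_left hc1 (le_of_lt hpir)]
  set X := W * ‖Acoef s r m * (Complex.exp (Complex.I * ((theta s r m (cm1 m) t : ℝ) : ℂ)) -
      Complex.exp (Complex.I * ((theta s r m 0 t : ℝ) : ℂ)))‖ with hXdef
  have hXnn : 0 ≤ X := by
    rw [hXdef]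
    positivity
  have hfin : X ≤ Real.sqrt (X ^ 2 + |cm1 m| ^ 2) := by
    have h := Real.sqrt_le_sqrt (show X ^ 2 ≤ X ^ 2 + |cm1 m| ^ 2 from by nlinarith [sq_nonneg |cm1 m|])
    rwa [Real.sqrt_sq hXnn] at h
  linarith [cm1_nonneg m]

/-- **The approximate solutions separate** (Step 1 of the proof of Theorem 1.3): for
`s > 5/3` and `r > 0`, the data satisfy `‖u_{m,1}(0) − u_{m,0}(0)‖_{H^s} = m^{−1/2} → 0`
as `m → ∞`, while there is `c_r > 0`, independent of `m` and `t`, with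
`‖u_{m,1}(t) − u_{m,0}(t)‖_{H^s} ≥ c_r·|sin t| − m^{−1/2}` for all `t ∈ [0,1]` and all
`m ≥ 1`. -/
theorem approximate_solutions_separate {s r : ℝ} (hs : s > 5 / 3) (hr : 0 < r) :
    (∀ m : ℕ, 1 ≤ m →
      hnorm s (fun x => umj s r m (cm1 m) 0 x - umj s r m 0 0 x) = cm1 m) ∧
    Filter.Tendsto
      (fun m : ℕ => hnorm s (fun x => umj s r m (cm1 m) 0 x - umj s r m 0 0 x))
      Filter.atTop (nhds 0) ∧
    ∃ c > 0, ∀ m : ℕ, 1 ≤ m → ∀ t ∈ Set.Icc (0:ℝ) 1,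
      c * |Real.sin t| - cm1 m ≤
        hnorm s (fun x => umj s r m (cm1 m) t x - umj s r m 0 t x) := by
  refine ⟨fun m _ => hnorm_zero_eq s r m, ?_, ?_⟩
  · have h1 : Filter.Tendsto cm1 Filter.atTop (nhds 0) := by
      have h2 : Filter.Tendsto (fun x : ℝ => x ^ (-(1/2 : ℝ))) Filter.atTop (nhds 0) :=
        tendsto_rpow_neg_atTop (by norm_num)
      exact h2.comp tendsto_natCast_atTop_atTop
    exact h1.congr (fun m => (hnorm_zero_eq s r m).symm)
  · refine ⟨r * (2 * Real.pi)⁻¹, by positivity, fun m hm t _ => part3aux hs hr m hm t⟩
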